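/- Let f₁(t) = a₁ e^{k₁ t} + b₁ and f₃(t) = a₃ e^{k₃ t} + b₃ with a₁, a₃ ≠ 0 and k₁, k₃ < 0. If there exist c₁ < c₂ with f₁(c₁) = f₃(c₁), f₁(c₂) = f₃(c₂), and f₁′(c₁) = f₃′(c₁), then f₁ = f₃ identically. -/

import Mathlib

theorem stmt_5 (a₁ a₃ b₁ b₃ k₁ k₃ c₁ c₂ : ℝ)
    (ha₁ : a₁ ≠ 0) (ha₃ : a₃ ≠ 0) (hk₁ : k₁ < 0) (hk₃ : k₃ < 0)
    (hc : c₁ < c₂)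
    (h1 : a₁ * Real.exp (k₁ * c₁) + b₁ = a₃ * Real.exp (k₃ * c₁) + b₃)
    (h2 : a₁ * Real.exp (k₁ * c₂) + b₁ = a₃ * Real.exp (k₃ * c₂) + b₃)
    (h3 : a₁ * k₁ * Real.exp (k₁ * c₁) = a₃ * k₃ * Real.exp (k₃ * c₁)) :
    ∀ t : ℝ, a₁ * Real.exp (k₁ * t) + b₁ = a₃ * Real.exp (k₃ * t) + b₃ := by
  by_cases hk : k₁ = k₃
  · -- same exponents: deduce a₁ = a₃ and b₁ = b₃
    subst hk
    have hne : Real.exp (k₁ * c₁) ≠ Real.exp (k₁ * c₂) := by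
      intro h
      have := Real.exp_injective h
      exact hc.ne (mul_left_cancel₀ hk₁.ne this)
    have key : (a₁ - a₃) * (Real.exp (k₁ * c₁) - Real.exp (k₁ * c₂)) = 0 := by nlinarith
    have ha : a₁ = a₃ := by
      rcases mul_eq_zero.1 key with h | h
      · linarith
      · exact absurd (by linarith) hne
    have hb : b₁ = b₃ := by nlinarith [Real.exp_pos (k₁ * c₁)]
    intro t; rw [ha, hb]
  · -- distinct exponents: use Rolle's theorem to get a contradiction
    exfalso
    set f : ℝ → ℝ := fun t => a₁ * Real.exp (k₁ * t) - a₃ * Real.exp (k₃ * t) with hf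
    have hfab : f c₁ = f c₂ := by simp only [hf]; linarith
    have hderiv : ∀ x : ℝ, HasDerivAt f
        (a₁ * k₁ * Real.exp (k₁ * x) - a₃ * k₃ * Real.exp (k₃ * x)) x := by
      intro x
      have h1 : HasDerivAt (fun t : ℝ => a₁ * Real.exp (k₁ * t))
          (a₁ * (k₁ * Real.exp (k₁ * x))) x := by
        have : HasDerivAt (fun t : ℝ => Real.exp (k₁ * t)) (Real.exp (k₁ * x) * k₁) x :=
          (Real.hasDerivAt_exp (k₁ * x)).comp x (by simpa using (hasDerivAt_id x).const_mul k₁)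
        simpa [mul_comm, mul_assoc, mul_left_comm] using this.const_mul a₁
      have h2 : HasDerivAt (fun t : ℝ => a₃ * Real.exp (k₃ * t))
          (a₃ * (k₃ * Real.exp (k₃ * x))) x := by
        have : HasDerivAt (fun t : ℝ => Real.exp (k₃ * t)) (Real.exp (k₃ * x) * k₃) x :=
          (Real.hasDerivAt_exp (k₃ * x)).comp x (by simpa using (hasDerivAt_id x).const_mul k₃)
        simpa [mul_comm, mul_assoc, mul_left_comm] using this.const_mul a₃
      have := h1.sub h2
      simpa [mul_assoc, hf, Pi.sub_def] using this
    obtain ⟨c, hcmem, hc0⟩ := exists_hasDerivAt_eq_zero hc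
      (fun x _ => (hderiv x).continuousAt.continuousWithinAt) hfab
      (fun x _ => hderiv x)
    have hc' : a₁ * k₁ * Real.exp (k₁ * c) = a₃ * k₃ * Real.exp (k₃ * c) := by linarith
    -- combine with h3 to force c = c₁
    have key : a₁ * k₁ * (Real.exp (k₁ * c₁ + k₃ * c)) =
        a₁ * k₁ * (Real.exp (k₁ * c + k₃ * c₁)) := by
      rw [Real.exp_add, Real.exp_add]
      calc a₁ * k₁ * (Real.exp (k₁ * c₁) * Real.exp (k₃ * c))
          = (a₁ * k₁ * Real.exp (k₁ * c₁)) * Real.exp (k₃ * c) := by ring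
        _ = (a₃ * k₃ * Real.exp (k₃ * c₁)) * Real.exp (k₃ * c) := by rw [h3]
        _ = (a₃ * k₃ * Real.exp (k₃ * c)) * Real.exp (k₃ * c₁) := by ring
        _ = (a₁ * k₁ * Real.exp (k₁ * c)) * Real.exp (k₃ * c₁) := by rw [hc']
        _ = a₁ * k₁ * (Real.exp (k₁ * c) * Real.exp (k₃ * c₁)) := by ring
    have hak : a₁ * k₁ ≠ 0 := mul_ne_zero ha₁ hk₁.ne
    have hexp : Real.exp (k₁ * c₁ + k₃ * c) = Real.exp (k₁ * c + k₃ * c₁) :=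
      mul_left_cancel₀ hak key
    have harg := Real.exp_injective hexp
    have hfac : (k₁ - k₃) * (c₁ - c) = 0 := by linarith
    rcases mul_eq_zero.1 hfac with h | h
    · exact hk (by linarith)
    · have hcc : c = c₁ := by linarith
      exact absurd hcmem.1 (by simp [hcc])
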